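/- Let α > −1, M ≥ 1, c_1, ..., c_M ∈ ℝ, μ_1, ..., μ_M ∈ ℝ, ν_1, ..., ν_M ∈ ℕ, and n ≥ 1. Suppose S_n is a real polynomial of degree n with leading coefficient (−1)^n/n! satisfying ⟨S_n, p⟩_S = 0 for every real polynomial p with deg p < n. Then the vector of derivative values of S_n satisfies the linear system: for each i ∈ {1, ..., M}, S_n^{(ν_i)}(c_i) = (L_n^α)^{(ν_i)}(c_i) − Σ_{j=1}^M μ_j · (∂^{ν_i+ν_j}/∂x^{ν_i} ∂y^{ν_j}) K_{n−1}^α(x, y)|_{x=c_i, y=c_j} · S_n^{(ν_j)}(c_j). -/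

import Mathlib

open Polynomial Finset MeasureTheory Real

/-- The generalized Laguerre polynomial
`L_n^α(x) = Σ_{k=0}^n (−1)^k ((α+k+1)_{n−k} / ((n−k)!·k!)) x^k`. -/
noncomputable def laguerre (α : ℝ) (n : ℕ) : Polynomial ℝ :=
  ∑ k ∈ Finset.range (n + 1),
    Polynomial.C ((-1 : ℝ) ^ k * (ascPochhammer ℝ (n - k)).eval (α + k + 1) /
      ((n - k).factorial * k.factorial)) * Polynomial.X ^ k

/-- The discrete Sobolev inner product
`⟨f, g⟩_S = ∫_0^∞ f(x) g(x) x^α e^{−x} dx + Σ_{j=1}^M μ_j f^{(ν_j)}(c_j) g^{(ν_j)}(c_j)`. -/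
noncomputable def sobolevInner (α : ℝ) {M : ℕ} (c μ : Fin M → ℝ) (ν : Fin M → ℕ)
    (f g : Polynomial ℝ) : ℝ :=
  (∫ x in Set.Ioi (0 : ℝ), f.eval x * g.eval x * x ^ α * Real.exp (-x)) +
  ∑ j, μ j * (Polynomial.derivative^[ν j] f).eval (c j) *
    (Polynomial.derivative^[ν j] g).eval (c j)


/-- The `n`-th Laguerre reproducing kernel
`K_n^α(x,y) = Σ_{k=0}^n (k!/Γ(α+k+1)) L_k^α(x) L_k^α(y)`. -/
noncomputable def laguerreKernel (α : ℝ) (n : ℕ) (x y : ℝ) : ℝ :=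
  ∑ k ∈ Finset.range (n + 1),
    (k.factorial : ℝ) / Real.Gamma (α + k + 1) * (laguerre α k).eval x * (laguerre α k).eval y





lemma laguerre_coeff (α : ℝ) (n k : ℕ) :
    (laguerre α n).coeff k = if k ≤ n then
      (-1 : ℝ) ^ k * (ascPochhammer ℝ (n - k)).eval (α + k + 1) /
        ((n - k).factorial * k.factorial) else 0 := by
  rw [laguerre, finset_sum_coeff]
  simp only [coeff_C_mul, coeff_X_pow, mul_ite, mul_one, mul_zero]
  rw [Finset.sum_ite_eq (Finset.range (n+1)) k]
  simp [Nat.lt_succ_iff]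

lemma laguerre_coeff_self (α : ℝ) (n : ℕ) :
    (laguerre α n).coeff n = (-1 : ℝ) ^ n / n.factorial := by
  rw [laguerre_coeff, if_pos le_rfl]
  simp [ascPochhammer_zero]

lemma laguerre_natDegree (α : ℝ) (n : ℕ) : (laguerre α n).natDegree = n := by
  have h1 : (laguerre α n).natDegree ≤ n := by
    rw [natDegree_le_iff_coeff_eq_zero]
    intro m hm
    rw [laguerre_coeff, if_neg (by omega)]
  have h2 : (laguerre α n).coeff n ≠ 0 := by
    rw [laguerre_coeff_self]
    positivity
  exact le_antisymm h1 (le_natDegree_of_ne_zero h2)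

lemma laguerre_ne_zero (α : ℝ) (n : ℕ) : laguerre α n ≠ 0 := by
  intro h
  have := laguerre_coeff_self α n
  rw [h] at this
  simp only [coeff_zero] at this
  have : ((-1 : ℝ) ^ n / n.factorial) ≠ 0 := by positivity
  simp_all

lemma laguerre_degree (α : ℝ) (n : ℕ) : (laguerre α n).degree = n := by
  rw [degree_eq_natDegree (laguerre_ne_zero α n), laguerre_natDegree]



noncomputable def W (α : ℝ) (p : Polynomial ℝ) : ℝ :=
  ∫ x in Set.Ioi (0 : ℝ), p.eval x * x ^ α * Real.exp (-x)

lemma integrable_mono {α : ℝ} (hα : -1 < α) (m : ℕ) :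
    IntegrableOn (fun x : ℝ => x ^ m * x ^ α * Real.exp (-x)) (Set.Ioi 0) := by
  have hpos : (0 : ℝ) < α + m + 1 := by
    have : (0:ℝ) ≤ m := Nat.cast_nonneg m
    linarith
  refine (Real.GammaIntegral_convergent hpos).congr_fun ?_ measurableSet_Ioi
  intro x hx
  have hx0 : (0:ℝ) < x := hx
  have : x ^ (α + ↑m + 1 - 1) = x ^ m * x ^ α := by
    rw [show α + ↑m + 1 - 1 = α + (m:ℝ) by ring, Real.rpow_add hx0, ← Real.rpow_natCast x m]
    ring
  simp only [this]
  ring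

lemma moment {α : ℝ} (hα : -1 < α) (m : ℕ) :
    ∫ x in Set.Ioi (0:ℝ), x ^ m * x ^ α * Real.exp (-x) = Real.Gamma (α + m + 1) := by
  have hpos : (0 : ℝ) < α + m + 1 := by
    have : (0:ℝ) ≤ m := Nat.cast_nonneg m
    linarith
  rw [Real.Gamma_eq_integral hpos]
  refine setIntegral_congr_fun measurableSet_Ioi fun x hx => ?_
  have hx0 : (0:ℝ) < x := hx
  rw [show α + ↑m + 1 - 1 = α + (m:ℝ) by ring, Real.rpow_add hx0, ← Real.rpow_natCast x m]
  ring

lemma W_eq_sum {α : ℝ} (hα : -1 < α) (p : Polynomial ℝ) (N : ℕ) (h : p.natDegree < N) :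
    W α p = ∑ m ∈ range N, p.coeff m * Real.Gamma (α + m + 1) := by
  have key : ∀ x ∈ Set.Ioi (0:ℝ), p.eval x * x ^ α * Real.exp (-x)
      = ∑ m ∈ range N, p.coeff m * (x ^ m * x ^ α * Real.exp (-x)) := by
    intro x _
    rw [Polynomial.eval_eq_sum_range' h, Finset.sum_mul, Finset.sum_mul]
    exact Finset.sum_congr rfl fun m _ => by ring
  rw [W, setIntegral_congr_fun measurableSet_Ioi key, integral_finset_sum _
    (fun m _ => ((integrable_mono hα m).const_mul _))]
  exact Finset.sum_congr rfl fun m _ => by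
    rw [MeasureTheory.integral_const_mul, moment hα m]

lemma W_zero {α : ℝ} (hα : -1 < α) : W α 0 = 0 := by
  rw [W_eq_sum hα 0 1 (by simp)]
  simp

lemma W_add {α : ℝ} (hα : -1 < α) (p q : Polynomial ℝ) :
    W α (p + q) = W α p + W α q := by
  set N := max p.natDegree q.natDegree + 1 with hN
  have h1 : p.natDegree < N := by omega
  have h2 : q.natDegree < N := by omega
  have h3 : (p + q).natDegree < N := lt_of_le_of_lt (natDegree_add_le p q) (by omega)
  rw [W_eq_sum hα _ N h3, W_eq_sum hα _ N h1, W_eq_sum hα _ N h2, ← Finset.sum_add_distrib]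
  exact Finset.sum_congr rfl fun m _ => by rw [coeff_add]; ring

lemma W_C_mul {α : ℝ} (hα : -1 < α) (a : ℝ) (p : Polynomial ℝ) :
    W α (Polynomial.C a * p) = a * W α p := by
  set N := p.natDegree + 1 with hN
  have h1 : p.natDegree < N := by omega
  have h2 : (Polynomial.C a * p).natDegree < N :=
    lt_of_le_of_lt (natDegree_C_mul_le a p) h1
  rw [W_eq_sum hα _ N h2, W_eq_sum hα _ N h1, Finset.mul_sum]
  exact Finset.sum_congr rfl fun m _ => by rw [coeff_C_mul]; ring

lemma W_sum {α : ℝ} (hα : -1 < α) {ι : Type*} (s : Finset ι) (f : ι → Polynomial ℝ) :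
    W α (∑ i ∈ s, f i) = ∑ i ∈ s, W α (f i) := by
  induction s using Finset.cons_induction with
  | empty => simpa using W_zero hα
  | cons a s ha ih => rw [Finset.sum_cons, W_add hα, ih, Finset.sum_cons]

lemma W_X_pow {α : ℝ} (hα : -1 < α) (m : ℕ) :
    W α (Polynomial.X ^ m) = Real.Gamma (α + m + 1) := by
  rw [W_eq_sum hα _ (m+1) (by simp [natDegree_X_pow])]
  simp only [coeff_X_pow]
  have : ∀ x ∈ Finset.range (m+1), (if x = m then (1:ℝ) else 0) * Real.Gamma (α + x + 1)
      = if x = m then Real.Gamma (α + x + 1) else 0 := by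
    intro x _; split <;> simp
  rw [Finset.sum_congr rfl this, Finset.sum_ite_eq' (Finset.range (m+1)) m]
  simp



lemma Gamma_ascPochhammer (s : ℝ) (hs : 0 < s) (m : ℕ) :
    Real.Gamma (s + m) = (ascPochhammer ℝ m).eval s * Real.Gamma s := by
  induction m with
  | zero => simp
  | succ m ih =>
      have h1 : s + ((m:ℕ)+1 : ℕ) = (s + m) + 1 := by push_cast; ring
      have h2 : s + (m:ℝ) ≠ 0 := by positivity
      rw [h1, Real.Gamma_add_one h2, ih, ascPochhammer_succ_right]
      simp only [Polynomial.eval_mul, Polynomial.eval_add, Polynomial.eval_X,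
        Polynomial.eval_natCast]
      ring

lemma comp_coeff (p : Polynomial ℝ) (N k : ℕ) (h : p.natDegree < N) :
    (p.comp (Polynomial.X + 1)).coeff k
      = ∑ m ∈ range N, p.coeff m * (m.choose k) := by
  conv_lhs => rw [p.as_sum_range' N h]
  rw [Polynomial.sum_comp, finset_sum_coeff]
  refine Finset.sum_congr rfl fun m _ => ?_
  rw [Polynomial.monomial_comp, coeff_C_mul, Polynomial.coeff_X_add_one_pow]

lemma alt_sum (n : ℕ) (P : Polynomial ℝ) (hP : P.natDegree ≤ n) :
    ∑ k ∈ range (n+1), (-1:ℝ)^k * (n.choose k) * P.eval (k:ℝ)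
      = (-1)^n * n.factorial * P.coeff n := by
  induction n generalizing P with
  | zero =>
      rw [Polynomial.eq_C_of_natDegree_le_zero hP]
      simp
  | succ n ih =>
      set Q : Polynomial ℝ := P.comp (Polynomial.X + 1) - P with hQ
      have hd1 : (Polynomial.X + 1 : Polynomial ℝ).natDegree = 1 := by
        simpa using Polynomial.natDegree_X_add_C (1:ℝ)
      have hcomp_deg : (P.comp (Polynomial.X + 1)).natDegree = P.natDegree := by
        rw [Polynomial.natDegree_comp, hd1, mul_one]
      -- coefficients of Q
      have hQc : ∀ k : ℕ, Q.coeff k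
          = (∑ m ∈ range (n+2), P.coeff m * (m.choose k)) - P.coeff k := by
        intro k
        rw [hQ, Polynomial.coeff_sub, comp_coeff P (n+2) k (by omega)]
      have hQdeg : Q.natDegree ≤ n := by
        rw [Polynomial.natDegree_le_iff_coeff_eq_zero]
        intro m hm
        rw [hQc]
        have hPm : ∀ j, n + 1 < j → P.coeff j = 0 := fun j hj =>
          Polynomial.coeff_eq_zero_of_natDegree_lt (by omega)
        rcases Nat.lt_or_ge (n+1) m with hcase | hcase
        · -- m ≥ n+2 : all choose terms with index ≤ n+1 < m vanish
          rw [Finset.sum_eq_zero, hPm m hcase, sub_zero]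
          intro j hj
          simp only [Finset.mem_range] at hj
          rw [Nat.choose_eq_zero_of_lt (by omega)]
          simp
        · -- m = n+1
          have hm' : m = n + 1 := by omega
          subst hm'
          rw [Finset.sum_range_succ, Finset.sum_eq_zero, Nat.choose_self]
          · simp
          · intro j hj
            simp only [Finset.mem_range] at hj
            rw [Nat.choose_eq_zero_of_lt (by omega)]
            simp
      have hQn : Q.coeff n = (n+1 : ℝ) * P.coeff (n+1) := by
        rw [hQc, Finset.sum_range_succ, Finset.sum_range_succ, Finset.sum_eq_zero,
          Nat.choose_self, Nat.choose_succ_self_right]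
        · push_cast; ring
        · intro j hj
          simp only [Finset.mem_range] at hj
          rw [Nat.choose_eq_zero_of_lt (by omega)]
          simp
      have hQeval : ∀ k : ℕ, Q.eval (k:ℝ) = P.eval ((k:ℝ)+1) - P.eval (k:ℝ) := by
        intro k
        rw [hQ, Polynomial.eval_sub, Polynomial.eval_comp]
        simp
      have key : ∑ k ∈ range (n+2), (-1:ℝ)^k * ((n+1).choose k) * P.eval (k:ℝ)
          = - ∑ k ∈ range (n+1), (-1:ℝ)^k * (n.choose k) * Q.eval (k:ℝ) := by
        have expand : ∀ k ∈ range (n+1), (-1:ℝ)^k * (n.choose k) * Q.eval (k:ℝ)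
            = (-1:ℝ)^k * (n.choose k) * P.eval ((k:ℝ)+1)
              - (-1:ℝ)^k * (n.choose k) * P.eval (k:ℝ) := by
          intro k _
          rw [hQeval]; ring
        rw [Finset.sum_congr rfl expand, Finset.sum_sub_distrib]
        rw [Finset.sum_range_succ' (fun k => (-1:ℝ)^k * ((n+1).choose k) * P.eval (k:ℝ)) (n+1)]
        have pascal : ∀ i ∈ range (n+1), (-1:ℝ)^(i+1) * ((n+1).choose (i+1)) * P.eval ((i:ℝ)+1)
            = -((-1:ℝ)^i * (n.choose i) * P.eval ((i:ℝ)+1))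
              - (-1:ℝ)^i * (n.choose (i+1)) * P.eval ((i:ℝ)+1) := by
          intro i _
          have : ((n+1).choose (i+1) : ℝ) = (n.choose i : ℝ) + (n.choose (i+1) : ℝ) := by
            exact_mod_cast Nat.choose_succ_succ n i
          rw [this]
          push_cast
          ring
        have cast1 : ∀ i ∈ range (n+1), (-1:ℝ)^(i+1) * ((n+1).choose (i+1)) * P.eval ((i+1:ℕ):ℝ)
            = (-1:ℝ)^(i+1) * ((n+1).choose (i+1)) * P.eval ((i:ℝ)+1) := by
          intro i _; push_cast; ring_nf
        rw [Finset.sum_congr rfl cast1, Finset.sum_congr rfl pascal]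
        have third : ∑ i ∈ range (n+1), (-1:ℝ)^i * (n.choose (i+1)) * P.eval ((i:ℝ)+1)
            = - ∑ i ∈ range (n+1), (-1:ℝ)^(i+1) * (n.choose (i+1)) * P.eval (((i+1:ℕ)):ℝ) := by
          rw [← Finset.sum_neg_distrib]
          refine Finset.sum_congr rfl fun i _ => ?_
          push_cast
          ring
        have fourth : ∑ i ∈ range (n+1), (-1:ℝ)^(i+1) * (n.choose (i+1)) * P.eval (((i+1:ℕ)):ℝ)
            = ∑ k ∈ range (n+1), (-1:ℝ)^k * (n.choose k) * P.eval ((k:ℕ):ℝ)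
              - (-1:ℝ)^0 * (n.choose 0) * P.eval ((0:ℕ):ℝ) := by
          rw [Finset.sum_range_succ' (fun k => (-1:ℝ)^k * (n.choose k) * P.eval ((k:ℕ):ℝ)) n,
            Finset.sum_range_succ (fun i => (-1:ℝ)^(i+1) * (n.choose (i+1)) * P.eval (((i+1:ℕ)):ℝ)) n]
          rw [Nat.choose_succ_self n]
          push_cast
          ring
        rw [Finset.sum_sub_distrib]
        simp only [third, fourth]
        have recast : ∀ k ∈ range (n+1), (-1:ℝ)^k * (n.choose k) * P.eval ((k:ℕ):ℝ)
            = (-1:ℝ)^k * (n.choose k) * P.eval ((k:ℝ)) := by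
          intro k _; norm_num
        rw [Finset.sum_congr rfl recast] at *
        simp only [Finset.sum_neg_distrib, Nat.choose_zero_right, Nat.cast_one]
        ring
      have hfac : ((n+1).factorial : ℝ) = (n+1) * n.factorial := by
        exact_mod_cast Nat.factorial_succ n
      rw [key, ih Q hQdeg, hQn, hfac]
      push_cast
      ring



lemma W_laguerre_X_pow {α : ℝ} (hα : -1 < α) (n m : ℕ) (hm : m ≤ n) :
    W α (laguerre α n * Polynomial.X ^ m)
      = (-1:ℝ)^n * Real.Gamma (α + n + 1) * (if m = n then 1 else 0) := by
  set P : Polynomial ℝ := (ascPochhammer ℝ m).comp (Polynomial.X + Polynomial.C (α+1)) with hPdef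
  have hd1 : (Polynomial.X + Polynomial.C (α+1)).natDegree = 1 := Polynomial.natDegree_X_add_C _
  have hPdeg : P.natDegree = m := by
    rw [hPdef, Polynomial.natDegree_comp, hd1, ascPochhammer_natDegree, mul_one]
  have hPlead : P.coeff m = 1 := by
    have h := Polynomial.leadingCoeff_comp (p := ascPochhammer ℝ m)
      (q := Polynomial.X + Polynomial.C (α+1)) (by rw [hd1]; exact one_ne_zero)
    rw [(monic_ascPochhammer ℝ m).leadingCoeff, (Polynomial.monic_X_add_C (α+1)).leadingCoeff] at h
    simp only [one_mul, one_pow] at h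
    have : P.leadingCoeff = 1 := by rw [hPdef, h]
    rwa [Polynomial.leadingCoeff, hPdeg] at this
  have hPeval : ∀ k : ℕ, P.eval (k:ℝ) = (ascPochhammer ℝ m).eval (α + k + 1) := by
    intro k
    rw [hPdef, Polynomial.eval_comp]
    simp only [Polynomial.eval_add, Polynomial.eval_X, Polynomial.eval_C]
    congr 1
    ring
  have expand : laguerre α n * Polynomial.X ^ m
      = ∑ k ∈ Finset.range (n+1),
          Polynomial.C ((-1 : ℝ) ^ k * (ascPochhammer ℝ (n - k)).eval (α + k + 1) /
            ((n - k).factorial * k.factorial)) * Polynomial.X ^ (k+m) := by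
    rw [laguerre, Finset.sum_mul]
    exact Finset.sum_congr rfl fun k _ => by rw [pow_add]; ring
  rw [expand, W_sum hα]
  have hterm : ∀ k ∈ Finset.range (n+1),
      W α (Polynomial.C ((-1 : ℝ) ^ k * (ascPochhammer ℝ (n - k)).eval (α + k + 1) /
            ((n - k).factorial * k.factorial)) * Polynomial.X ^ (k+m))
      = Real.Gamma (α+n+1) / n.factorial * ((-1:ℝ)^k * (n.choose k) * P.eval (k:ℝ)) := by
    intro k hk
    simp only [Finset.mem_range, Nat.lt_succ_iff] at hk
    have hs : (0:ℝ) < α + k + 1 := by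
      have : (0:ℝ) ≤ k := Nat.cast_nonneg k
      linarith
    have h1 : (ascPochhammer ℝ (n-k)).eval (α+(k:ℝ)+1) * Real.Gamma (α+(k:ℝ)+1)
        = Real.Gamma (α+n+1) := by
      rw [← Gamma_ascPochhammer _ hs (n-k)]
      congr 1
      rw [Nat.cast_sub hk]
      ring
    have h2 : Real.Gamma (α + ((k:ℕ)+(m:ℕ) : ℕ) + 1)
        = (ascPochhammer ℝ m).eval (α+(k:ℝ)+1) * Real.Gamma (α+(k:ℝ)+1) := by
      rw [← Gamma_ascPochhammer _ hs m]
      congr 1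
      push_cast
      ring
    have hfn : (n.factorial : ℝ) ≠ 0 := by positivity
    have hff : (((n-k).factorial : ℝ) * (k.factorial : ℝ)) ≠ 0 := by positivity
    have h3 : ((n.choose k : ℝ)) * (((n-k).factorial : ℝ) * (k.factorial : ℝ))
        = (n.factorial : ℝ) := by
      have := Nat.choose_mul_factorial_mul_factorial hk
      push_cast [← this]
      ring
    rw [W_C_mul hα, W_X_pow hα, h2, hPeval k, ← h1]
    field_simp
    linear_combination (-((ascPochhammer ℝ (n-k)).eval (α+(k:ℝ)+1) *
      (ascPochhammer ℝ m).eval (α+(k:ℝ)+1))) * h3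
  rw [Finset.sum_congr rfl hterm, ← Finset.mul_sum, alt_sum n P (by omega)]
  rcases eq_or_ne m n with h | h
  · subst h
    rw [if_pos rfl, hPlead]
    have hfn : (m.factorial : ℝ) ≠ 0 := by positivity
    field_simp
  · rw [if_neg h, Polynomial.coeff_eq_zero_of_natDegree_lt (by omega)]
    ring

lemma W_laguerre_mul_poly {α : ℝ} (hα : -1 < α) (n : ℕ) (p : Polynomial ℝ)
    (hp : p.degree < n) : W α (laguerre α n * p) = 0 := by
  by_cases hp0 : p = 0
  · rw [hp0, mul_zero, W_zero hα]
  have hnd : p.natDegree < n := (Polynomial.natDegree_lt_iff_degree_lt hp0).mpr hp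
  have hrep : laguerre α n * p
      = ∑ m ∈ Finset.range n, Polynomial.C (p.coeff m) * (laguerre α n * Polynomial.X ^ m) := by
    conv_lhs => rw [p.as_sum_range' n hnd]
    rw [Finset.mul_sum]
    exact Finset.sum_congr rfl fun m _ => by
      rw [← Polynomial.C_mul_X_pow_eq_monomial]
      ring
  rw [hrep, W_sum hα]
  refine Finset.sum_eq_zero fun m hm => ?_
  simp only [Finset.mem_range] at hm
  rw [W_C_mul hα, W_laguerre_X_pow hα n m (le_of_lt hm), if_neg (Nat.ne_of_lt hm),
    mul_zero, mul_zero]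

lemma W_laguerre_self {α : ℝ} (hα : -1 < α) (m : ℕ) :
    W α (laguerre α m * laguerre α m) = Real.Gamma (α + m + 1) / m.factorial := by
  have split : laguerre α m * laguerre α m
      = ∑ k ∈ Finset.range (m+1),
          Polynomial.C ((-1 : ℝ) ^ k * (ascPochhammer ℝ (m - k)).eval (α + k + 1) /
            ((m - k).factorial * k.factorial)) * (laguerre α m * Polynomial.X ^ k) := by
    nth_rewrite 2 [laguerre]
    rw [Finset.mul_sum]
    exact Finset.sum_congr rfl fun k _ => by ring
  rw [split, W_sum hα]
  have hterm : ∀ k ∈ Finset.range (m+1),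
      W α (Polynomial.C ((-1 : ℝ) ^ k * (ascPochhammer ℝ (m - k)).eval (α + k + 1) /
            ((m - k).factorial * k.factorial)) * (laguerre α m * Polynomial.X ^ k))
      = if k = m then Real.Gamma (α + m + 1) / m.factorial else 0 := by
    intro k hk
    simp only [Finset.mem_range, Nat.lt_succ_iff] at hk
    rw [W_C_mul hα, W_laguerre_X_pow hα m k hk]
    rcases eq_or_ne k m with h | h
    · subst h
      rw [if_pos rfl, if_pos rfl]
      simp only [Nat.sub_self, ascPochhammer_zero, Polynomial.eval_one, Nat.factorial_zero,
        Nat.cast_one, one_mul, mul_one]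
      have : ((-1:ℝ)^k / k.factorial) * ((-1)^k * Real.Gamma (α + k + 1))
          = ((-1:ℝ)^k * (-1)^k) * (Real.Gamma (α + k + 1) / k.factorial) := by ring
      rw [this, ← pow_add, Even.neg_one_pow ⟨k, rfl⟩, one_mul]
    · rw [if_neg h, if_neg h, mul_zero, mul_zero]
  rw [Finset.sum_congr rfl hterm, Finset.sum_ite_eq' (Finset.range (m+1)) m]
  simp

lemma W_laguerre_mul_laguerre_ne {α : ℝ} (hα : -1 < α) {k m : ℕ} (hkm : k ≠ m) :
    W α (laguerre α k * laguerre α m) = 0 := by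
  rcases lt_or_gt_of_ne hkm with h | h
  · rw [mul_comm]
    refine W_laguerre_mul_poly hα m (laguerre α k) ?_
    rw [laguerre_degree]
    exact_mod_cast h
  · refine W_laguerre_mul_poly hα k (laguerre α m) ?_
    rw [laguerre_degree]
    exact_mod_cast h

lemma exists_rep (α : ℝ) (n : ℕ) (R : Polynomial ℝ) (h : R.degree < n) :
    ∃ b : ℕ → ℝ, R = ∑ k ∈ Finset.range n, Polynomial.C (b k) * laguerre α k := by
  induction n generalizing R with
  | zero =>
      refine ⟨0, ?_⟩
      simp only [Finset.range_zero, Finset.sum_empty]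
      by_contra hR
      have := (Polynomial.natDegree_lt_iff_degree_lt hR).mpr h
      omega
  | succ n ih =>
      have hlc0' : ((-1:ℝ)^n / n.factorial) ≠ 0 := by positivity
      set lc : ℝ := (-1:ℝ)^n / n.factorial with hlc
      have hlc0 : lc ≠ 0 := hlc0'
      set d : ℝ := R.coeff n with hd
      set R' := R - Polynomial.C (d / lc) * laguerre α n with hR'
      have hcoeffR : ∀ m : ℕ, n ≤ m → R.coeff m = if m = n then d else 0 := by
        intro m hm
        rcases eq_or_ne m n with h' | h'
        · subst h'; rw [if_pos rfl]
        · rw [if_neg h']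
          exact (Polynomial.degree_lt_iff_coeff_zero R (n+1)).mp h m (by omega)
      have hdeg' : R'.degree < n := by
        rw [Polynomial.degree_lt_iff_coeff_zero]
        intro m hm
        rw [hR', Polynomial.coeff_sub, Polynomial.coeff_C_mul, laguerre_coeff]
        rcases eq_or_ne m n with h' | h'
        · subst h'
          rw [hcoeffR m le_rfl, if_pos rfl, if_pos le_rfl]
          simp only [Nat.sub_self, ascPochhammer_zero, Polynomial.eval_one, Nat.factorial_zero,
            Nat.cast_one, one_mul, mul_one]
          rw [div_mul_cancel₀ d hlc0]  -- careful: (d / lc) * ((-1)^m /m!) with lc def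
          ring
        · rw [hcoeffR m (by omega), if_neg h', if_neg (by omega)]
          ring
      obtain ⟨b, hb⟩ := ih R' hdeg'
      refine ⟨fun k => if k = n then d / lc else b k, ?_⟩
      show R = ∑ k ∈ Finset.range (n+1), Polynomial.C (if k = n then d / lc else b k) * laguerre α k
      have hsum : ∑ k ∈ Finset.range (n+1),
            Polynomial.C (if k = n then d / lc else b k) * laguerre α k
          = (∑ k ∈ Finset.range n, Polynomial.C (b k) * laguerre α k)
            + Polynomial.C (d/lc) * laguerre α n := by
        rw [Finset.sum_range_succ, if_pos rfl]
        congr 1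
        refine Finset.sum_congr rfl fun k hk => ?_
        simp only [Finset.mem_range] at hk
        rw [if_neg (by omega)]
      rw [hsum, ← hb, hR']
      ring




lemma iterate_derivative_add' (s : ℕ) (p q : Polynomial ℝ) :
    Polynomial.derivative^[s] (p + q)
      = Polynomial.derivative^[s] p + Polynomial.derivative^[s] q := by
  induction s generalizing p q with
  | zero => rfl
  | succ s ih =>
      rw [Function.iterate_succ_apply, Function.iterate_succ_apply, Function.iterate_succ_apply,
        Polynomial.derivative_add, ih]

lemma iteratedDeriv_polynomial (m : ℕ) (p : Polynomial ℝ) :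
    iteratedDeriv m (fun x => p.eval x) = fun x => (Polynomial.derivative^[m] p).eval x := by
  induction m generalizing p with
  | zero => simp [iteratedDeriv_zero]
  | succ m ih =>
      rw [iteratedDeriv_succ']
      have h1 : deriv (fun x => p.eval x) = fun x => (Polynomial.derivative p).eval x := by
        funext x
        exact Polynomial.deriv (𝕜 := ℝ) (p := p)
      rw [h1, ih (Polynomial.derivative p)]
      funext x
      rw [Function.iterate_succ_apply]

lemma iteratedDeriv_polynomial_apply (m : ℕ) (p : Polynomial ℝ) (x : ℝ) :
    iteratedDeriv m (fun t => p.eval t) x = (Polynomial.derivative^[m] p).eval x := by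
  rw [iteratedDeriv_polynomial]

lemma kernel_deriv (α : ℝ) (N s t : ℕ) (x0 y0 : ℝ) :
    iteratedDeriv s (fun x => iteratedDeriv t (fun y => laguerreKernel α N x y) y0) x0
    = ∑ k ∈ Finset.range (N+1), (k.factorial : ℝ) / Real.Gamma (α + k + 1) *
        ((Polynomial.derivative^[s] (laguerre α k)).eval x0) *
        ((Polynomial.derivative^[t] (laguerre α k)).eval y0) := by
  have inner : ∀ x : ℝ, iteratedDeriv t (fun y => laguerreKernel α N x y) y0
      = ∑ k ∈ Finset.range (N+1), (k.factorial : ℝ) / Real.Gamma (α + k + 1) *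
          (laguerre α k).eval x * (Polynomial.derivative^[t] (laguerre α k)).eval y0 := by
    intro x
    have h1 : (fun y => laguerreKernel α N x y)
        = fun y => (∑ k ∈ Finset.range (N+1),
            Polynomial.C ((k.factorial : ℝ) / Real.Gamma (α + k + 1) * (laguerre α k).eval x)
              * laguerre α k).eval y := by
      funext y
      rw [Polynomial.eval_finset_sum, laguerreKernel]
      refine Finset.sum_congr rfl fun k _ => ?_
      rw [Polynomial.eval_mul, Polynomial.eval_C]
    rw [h1, iteratedDeriv_polynomial_apply, Polynomial.iterate_derivative_sum,
      Polynomial.eval_finset_sum]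
    refine Finset.sum_congr rfl fun k _ => ?_
    rw [Polynomial.iterate_derivative_C_mul, Polynomial.eval_mul, Polynomial.eval_C]
  have outer : (fun x => iteratedDeriv t (fun y => laguerreKernel α N x y) y0)
      = fun x => (∑ k ∈ Finset.range (N+1),
          Polynomial.C ((k.factorial : ℝ) / Real.Gamma (α + k + 1)
            * (Polynomial.derivative^[t] (laguerre α k)).eval y0) * laguerre α k).eval x := by
    funext x
    rw [inner x, Polynomial.eval_finset_sum]
    refine Finset.sum_congr rfl fun k _ => ?_
    rw [Polynomial.eval_mul, Polynomial.eval_C]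
    ring
  rw [outer, iteratedDeriv_polynomial_apply, Polynomial.iterate_derivative_sum,
    Polynomial.eval_finset_sum]
  refine Finset.sum_congr rfl fun k _ => ?_
  rw [Polynomial.iterate_derivative_C_mul, Polynomial.eval_mul, Polynomial.eval_C]
  ring

/-- The vector of derivative values of the Sobolev-orthogonal polynomial `S_n` satisfies a
linear system involving mixed partial derivatives of the kernel `K_{n−1}^α`. -/
theorem sobolev_derivative_values_linear_system (α : ℝ) (hα : -1 < α) (M : ℕ) (hM : 1 ≤ M)
    (c : Fin M → ℝ) (μ : Fin M → ℝ) (ν : Fin M → ℕ) (n : ℕ) (hn : 1 ≤ n)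
    (S : Polynomial ℝ) (hdeg : S.natDegree = n)
    (hlead : S.leadingCoeff = (-1) ^ n / n.factorial)
    (horth : ∀ p : Polynomial ℝ, p.degree < n → sobolevInner α c μ ν S p = 0) (i : Fin M) :
    (Polynomial.derivative^[ν i] S).eval (c i)
      = (Polynomial.derivative^[ν i] (laguerre α n)).eval (c i) -
        ∑ j, μ j *
          iteratedDeriv (ν i)
            (fun x => iteratedDeriv (ν j) (fun y => laguerreKernel α (n - 1) x y) (c j))
            (c i) *
          (Polynomial.derivative^[ν j] S).eval (c j) := by
  classical
  have hΓ : ∀ k : ℕ, Real.Gamma (α + k + 1) ≠ 0 := by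
    intro k
    have hk : (0:ℝ) ≤ k := Nat.cast_nonneg k
    exact ne_of_gt (Real.Gamma_pos_of_pos (by linarith))
  set R : Polynomial ℝ := S - laguerre α n with hR
  have hRdeg : R.degree < (n : ℕ) := by
    rw [Polynomial.degree_lt_iff_coeff_zero]
    intro m hm
    rw [hR, Polynomial.coeff_sub]
    rcases eq_or_ne m n with h | h
    · subst h
      have e1 : S.coeff m = S.leadingCoeff := hdeg ▸ S.coeff_natDegree
      rw [e1, hlead, laguerre_coeff_self, sub_self]
    · have e1 : S.coeff m = 0 := Polynomial.coeff_eq_zero_of_natDegree_lt (by omega)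
      have e2 : (laguerre α n).coeff m = 0 :=
        Polynomial.coeff_eq_zero_of_natDegree_lt (by rw [laguerre_natDegree]; omega)
      rw [e1, e2, sub_self]
  obtain ⟨b, hb⟩ := exists_rep α n R hRdeg
  have hW_RL : ∀ m : ℕ, m < n → W α (R * laguerre α m)
      = b m * (Real.Gamma (α + m + 1) / m.factorial) := by
    intro m hm
    have hsplit : R * laguerre α m
        = ∑ k ∈ Finset.range n, Polynomial.C (b k) * (laguerre α k * laguerre α m) := by
      rw [hb, Finset.sum_mul]
      exact Finset.sum_congr rfl fun k _ => by ring
    rw [hsplit, W_sum hα, Finset.sum_eq_single_of_mem m (Finset.mem_range.mpr hm)]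
    · rw [W_C_mul hα, W_laguerre_self hα]
    · intro k hk hkm
      rw [W_C_mul hα, W_laguerre_mul_laguerre_ne hα hkm, mul_zero]
  have hW_SL : ∀ m : ℕ, m < n → W α (S * laguerre α m)
      = - ∑ j, μ j * (Polynomial.derivative^[ν j] S).eval (c j) *
          (Polynomial.derivative^[ν j] (laguerre α m)).eval (c j) := by
    intro m hm
    have hdeg_m : (laguerre α m).degree < (n:ℕ) := by
      rw [laguerre_degree]
      exact_mod_cast hm
    have h0 := horth (laguerre α m) hdeg_m
    rw [sobolevInner] at h0
    have hint : (∫ x in Set.Ioi (0:ℝ), S.eval x * (laguerre α m).eval x * x ^ α * Real.exp (-x))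
        = W α (S * laguerre α m) := by
      rw [W]
      exact MeasureTheory.setIntegral_congr_fun measurableSet_Ioi fun x _ => by
        rw [Polynomial.eval_mul]
    rw [hint] at h0
    linarith
  have hWeq : ∀ m : ℕ, m < n → W α (S * laguerre α m) = W α (R * laguerre α m) := by
    intro m hm
    have hdeg_m : (laguerre α m).degree < (n:ℕ) := by
      rw [laguerre_degree]
      exact_mod_cast hm
    have hS : S * laguerre α m = R * laguerre α m + laguerre α n * laguerre α m := by
      rw [hR]; ring
    rw [hS, W_add hα, W_laguerre_mul_poly hα n _ hdeg_m, add_zero]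
  have hbval : ∀ m : ℕ, m < n → b m
      = (- ∑ j, μ j * (Polynomial.derivative^[ν j] S).eval (c j) *
          (Polynomial.derivative^[ν j] (laguerre α m)).eval (c j))
        * ((m.factorial : ℝ) / Real.Gamma (α + m + 1)) := by
    intro m hm
    have h1 := hW_RL m hm
    rw [← hWeq m hm, hW_SL m hm] at h1
    have hΓm := hΓ m
    have hfm : (m.factorial : ℝ) ≠ 0 := by positivity
    rw [h1]
    field_simp
  have hSder : ∀ s0 : ℕ, ∀ z : ℝ, (Polynomial.derivative^[s0] S).eval z
      = (Polynomial.derivative^[s0] (laguerre α n)).eval z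
        + ∑ k ∈ Finset.range n, b k * (Polynomial.derivative^[s0] (laguerre α k)).eval z := by
    intro s0 z
    have hSrep : S = laguerre α n + ∑ k ∈ Finset.range n, Polynomial.C (b k) * laguerre α k := by
      rw [← hb, hR]; ring
    rw [hSrep, iterate_derivative_add', Polynomial.iterate_derivative_sum,
      Polynomial.eval_add, Polynomial.eval_finset_sum]
    congr 1
    refine Finset.sum_congr rfl fun k _ => ?_
    rw [Polynomial.iterate_derivative_C_mul, Polynomial.eval_mul, Polynomial.eval_C]
  have hKD : ∀ j : Fin M, iteratedDeriv (ν i)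
      (fun x => iteratedDeriv (ν j) (fun y => laguerreKernel α (n - 1) x y) (c j)) (c i)
      = ∑ k ∈ Finset.range n, (k.factorial : ℝ) / Real.Gamma (α + k + 1) *
          (Polynomial.derivative^[ν i] (laguerre α k)).eval (c i) *
          (Polynomial.derivative^[ν j] (laguerre α k)).eval (c j) := by
    intro j
    rw [kernel_deriv]
    rw [Nat.sub_add_cancel hn]
  have hrhs : (∑ j, μ j * iteratedDeriv (ν i)
        (fun x => iteratedDeriv (ν j) (fun y => laguerreKernel α (n - 1) x y) (c j)) (c i) *
        (Polynomial.derivative^[ν j] S).eval (c j))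
      = ∑ j, ∑ k ∈ Finset.range n, μ j * ((k.factorial : ℝ) / Real.Gamma (α + k + 1) *
          (Polynomial.derivative^[ν i] (laguerre α k)).eval (c i) *
          (Polynomial.derivative^[ν j] (laguerre α k)).eval (c j)) *
          (Polynomial.derivative^[ν j] S).eval (c j) := by
    refine Finset.sum_congr rfl fun j _ => ?_
    rw [hKD j, Finset.mul_sum, Finset.sum_mul]
  have main : ∑ k ∈ Finset.range n, b k * (Polynomial.derivative^[ν i] (laguerre α k)).eval (c i)
      = - ∑ k ∈ Finset.range n, ∑ j, μ j * ((k.factorial : ℝ) / Real.Gamma (α + k + 1) *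
          (Polynomial.derivative^[ν i] (laguerre α k)).eval (c i) *
          (Polynomial.derivative^[ν j] (laguerre α k)).eval (c j)) *
          (Polynomial.derivative^[ν j] S).eval (c j) := by
    rw [← Finset.sum_neg_distrib]
    refine Finset.sum_congr rfl fun k hk => ?_
    simp only [Finset.mem_range] at hk
    rw [hbval k hk, neg_mul, neg_mul, neg_inj, Finset.sum_mul, Finset.sum_mul]
    exact Finset.sum_congr rfl fun j _ => by ring
  rw [hSder (ν i) (c i), hrhs, Finset.sum_comm, main]
  ring
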